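/- Let A be a finite index set with design matrix X_A ∈ ℝ^{n×|A|}, α > 0 (so that X_Aᵀ X_A + α I is invertible), y ∈ ℝⁿ, and s ∈ ℝ^{|A|}. Suppose β, β′ ∈ ℝ^{|A|} and λ_t, λ_{t+1} ∈ ℝ satisfy −X_Aᵀ(y − X_A β) + α β + λ_t s = 0 and −X_Aᵀ(y − X_A β′) + α β′ + λ_{t+1} s = 0 (same active set and same sign vector s). Then β′ − β = −(X_Aᵀ X_A + α I_{|A|})⁻¹ s · (λ_{t+1} − λ_t); in particular the elastic-net solution is piecewise linear in λ with direction ν_A(λ) = (X_Aᵀ X_A + α I_{|A|})⁻¹ s. -/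

import Mathlib

open Matrix

/-- In the elastic-net λ-path, if the KKT stationarity condition holds on the active set
with the same sign vector at two regularization levels, the solution moves linearly in λ
with direction ν_A = (X_Aᵀ X_A + α I)⁻¹ s. -/
theorem elastic_net_lambda_path_piecewise_linear
    (n a : ℕ) (X : Matrix (Fin n) (Fin a) ℝ) (α : ℝ) (hα : 0 < α)
    (y : Fin n → ℝ) (s : Fin a → ℝ)
    (β β' : Fin a → ℝ) (lamt lamt1 : ℝ)
    (h : -(Xᵀ.mulVec (y - X.mulVec β)) + α • β + lamt • s = 0)
    (h' : -(Xᵀ.mulVec (y - X.mulVec β')) + α • β' + lamt1 • s = 0) :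
    β' - β =
      -((lamt1 - lamt) •
        ((Xᵀ * X + α • (1 : Matrix (Fin a) (Fin a) ℝ))⁻¹.mulVec s)) := by
  set M : Matrix (Fin a) (Fin a) ℝ := Xᵀ * X + α • (1 : Matrix (Fin a) (Fin a) ℝ) with hM
  have hPSD : (Xᵀ * X).PosSemidef := by
    have := Matrix.posSemidef_conjTranspose_mul_self X
    simpa using this
  have hsm : (α • (1 : Matrix (Fin a) (Fin a) ℝ)).PosDef := by
    constructor
    · simp [Matrix.IsHermitian]
    · intro x hx
      exact (Matrix.PosDef.one.smul hα).2 hx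
  have hPD : M.PosDef := Matrix.PosDef.posSemidef_add hPSD hsm
  have hunit : IsUnit M := hPD.isUnit
  have hkey : M.mulVec (β' - β) = -((lamt1 - lamt) • s) := by
    have e := sub_eq_zero.mpr (h'.trans h.symm)
    have : M.mulVec (β' - β) + (lamt1 - lamt) • s = 0 := by
      have expand : M.mulVec (β' - β) + (lamt1 - lamt) • s
          = (-(Xᵀ.mulVec (y - X.mulVec β')) + α • β' + lamt1 • s)
            - (-(Xᵀ.mulVec (y - X.mulVec β)) + α • β + lamt • s) := by
        simp only [hM, Matrix.add_mulVec, Matrix.smul_mulVec, Matrix.one_mulVec,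
          Matrix.mulVec_sub, Matrix.sub_mulVec, sub_smul]
        funext i
        simp [Matrix.mulVec_sub, mul_sub, sub_smul]
        ring
      rw [expand, h, h']
      simp
    exact eq_neg_of_add_eq_zero_left this
  have hinv := hunit.invertible
  calc β' - β = M⁻¹.mulVec (M.mulVec (β' - β)) := by
        rw [Matrix.mulVec_mulVec, Matrix.nonsing_inv_mul _ (Matrix.isUnit_iff_isUnit_det _ |>.mp hunit), Matrix.one_mulVec]
      _ = -((lamt1 - lamt) • M⁻¹.mulVec s) := by
        rw [hkey]
        simp [Matrix.mulVec_neg, Matrix.mulVec_smul]
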